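/- Let γ > 2 be a Perron number such that every Galois conjugate γ' ≠ γ of γ satisfies |γ'| ≤ γ − 2. Let α be the unique real number greater than 1 satisfying α + 1/α = γ. Then α is a bi-Perron number. -/

import Mathlib

open Polynomial

/-- A Perron number: a real algebraic integer `p ≥ 1` strictly greater than the
absolute value of each of its other Galois conjugates. -/
def IsPerron (p : ℝ) : Prop :=
  1 ≤ p ∧ IsIntegral ℤ p ∧
    ∀ z : ℂ, (Polynomial.aeval z) (minpoly ℚ p) = 0 → z ≠ (p : ℂ) → ‖z‖ < p

/-- A bi-Perron number: a real algebraic unit `α > 1` (the minimal polynomial over ℚ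
has constant term `±1`) all of whose Galois conjugates other than `α` and possibly
`α⁻¹` lie in the open annulus `1/α < |z| < α`. -/
def IsBiPerron (α : ℝ) : Prop :=
  1 < α ∧ IsIntegral ℤ α ∧
    ((minpoly ℚ α).coeff 0 = 1 ∨ (minpoly ℚ α).coeff 0 = -1) ∧
    ∀ z : ℂ, (Polynomial.aeval z) (minpoly ℚ α) = 0 → z ≠ (α : ℂ) → z ≠ ((α : ℂ))⁻¹ →
      1 / α < ‖z‖ ∧ ‖z‖ < α

/-- `biQ P` is the polynomial `X ^ n * P (X + 1/X)` (where `n = deg P`). -/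
noncomputable def biQ (P : Polynomial ℤ) : Polynomial ℤ :=
  ∑ i ∈ Finset.range (P.natDegree + 1),
    Polynomial.C (P.coeff i) * (Polynomial.X ^ 2 + 1) ^ i *
      Polynomial.X ^ (P.natDegree - i)

lemma biQ_aeval {K : Type*} [Field K] (P : Polynomial ℤ) {z : K} (hz : z ≠ 0) :
    Polynomial.aeval z (biQ P) = z ^ P.natDegree * Polynomial.aeval (z + z⁻¹) P := by
  rw [biQ, map_sum, Polynomial.aeval_eq_sum_range, Finset.mul_sum]
  refine Finset.sum_congr rfl fun i hi => ?_
  have hi' : i ≤ P.natDegree := Nat.lt_succ_iff.mp (Finset.mem_range.mp hi)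
  simp only [map_mul, map_pow, map_add, map_one, Polynomial.aeval_X, Polynomial.aeval_C,
    zsmul_eq_mul]
  have h1 : (z ^ 2 + 1) = (z + z⁻¹) * z := by field_simp
  have h2 : z ^ P.natDegree = z ^ i * z ^ (P.natDegree - i) := by
    rw [← pow_add]; congr 1; omega
  rw [h1, mul_pow, h2]
  simp only [algebraMap_int_eq, eq_intCast]
  ring

lemma biQ_coeff_zero (P : Polynomial ℤ) (hP : P.Monic) : (biQ P).coeff 0 = 1 := by
  rw [Polynomial.coeff_zero_eq_eval_zero, biQ, Polynomial.eval_finset_sum,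
    Finset.sum_eq_single P.natDegree]
  · simp [hP.coeff_natDegree]
  · intro i hi hne
    have hi' : i ≤ P.natDegree := Nat.lt_succ_iff.mp (Finset.mem_range.mp hi)
    simp [zero_pow (by omega : P.natDegree - i ≠ 0)]
  · intro h; exact absurd (Finset.self_mem_range_succ _) h

lemma biQ_monic (P : Polynomial ℤ) (hP : P.Monic) : (biQ P).Monic := by
  have hX : (Polynomial.X ^ 2 + 1 : Polynomial ℤ).Monic := by
    simpa using Polynomial.monic_X_pow_add_C (1 : ℤ) (two_ne_zero)
  have hXd : (Polynomial.X ^ 2 + 1 : Polynomial ℤ).natDegree = 2 := by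
    simpa using Polynomial.natDegree_X_pow_add_C (n := 2) (r := (1 : ℤ))
  have key : biQ P = (Polynomial.X ^ 2 + 1) ^ P.natDegree +
      ∑ i ∈ Finset.range P.natDegree,
        Polynomial.C (P.coeff i) * (Polynomial.X ^ 2 + 1) ^ i *
          Polynomial.X ^ (P.natDegree - i) := by
    rw [biQ, Finset.sum_range_succ, hP.coeff_natDegree, Nat.sub_self, pow_zero, map_one,
      one_mul, mul_one, add_comm]
  rw [key]
  refine (hX.pow P.natDegree).add_of_left ?_
  have hdegpow : ((Polynomial.X ^ 2 + 1 : Polynomial ℤ) ^ P.natDegree).degree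
      = ((P.natDegree * 2 : ℕ) : WithBot ℕ) := by
    rw [Polynomial.degree_eq_natDegree (hX.pow _).ne_zero, (hX.natDegree_pow _), hXd]
  rw [hdegpow]
  refine lt_of_le_of_lt (Polynomial.degree_sum_le _ _) ?_
  rw [Finset.sup_lt_iff (WithBot.bot_lt_coe _)]
  intro i hi
  have hi' : i < P.natDegree := Finset.mem_range.mp hi
  have hb : (Polynomial.C (P.coeff i) * (Polynomial.X ^ 2 + 1) ^ i *
      Polynomial.X ^ (P.natDegree - i)).natDegree < P.natDegree * 2 := by
    have h1 := Polynomial.natDegree_mul_le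
      (p := Polynomial.C (P.coeff i) * (Polynomial.X ^ 2 + 1) ^ i)
      (q := (Polynomial.X : Polynomial ℤ) ^ (P.natDegree - i))
    have h2 := Polynomial.natDegree_mul_le (p := Polynomial.C (P.coeff i))
      (q := ((Polynomial.X : Polynomial ℤ) ^ 2 + 1) ^ i)
    have h3 : (((Polynomial.X : Polynomial ℤ) ^ 2 + 1) ^ i).natDegree ≤ i * 2 := by
      calc (((Polynomial.X : Polynomial ℤ) ^ 2 + 1) ^ i).natDegree
          ≤ i * ((Polynomial.X : Polynomial ℤ) ^ 2 + 1).natDegree :=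
            Polynomial.natDegree_pow_le
        _ = i * 2 := by rw [hXd]
    simp only [Polynomial.natDegree_C, Polynomial.natDegree_X_pow, zero_add] at h1 h2
    omega
  exact lt_of_le_of_lt Polynomial.degree_le_natDegree (Nat.cast_lt.mpr hb)

theorem perron_to_biperron (γ : ℝ) (hγ : IsPerron γ) (hγ2 : 2 < γ)
    (hconj : ∀ z : ℂ, (Polynomial.aeval z) (minpoly ℚ γ) = 0 → z ≠ (γ : ℂ) →
      ‖z‖ ≤ γ - 2)
    (α : ℝ) (hα : 1 < α) (hαγ : α + 1 / α = γ) :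
    IsBiPerron α := by
  obtain ⟨hγ1, hγint, _⟩ := hγ
  have hα0 : (0 : ℝ) < α := lt_trans one_pos hα
  have hαne : α ≠ 0 := ne_of_gt hα0
  set P := minpoly ℤ γ with hPdef
  have hPmonic : P.Monic := minpoly.monic hγint
  have hQmonic := biQ_monic P hPmonic
  have hQ0 := biQ_coeff_zero P hPmonic
  have hγeq : α + α⁻¹ = γ := by rw [← hαγ, one_div]
  have hQα : Polynomial.aeval α (biQ P) = 0 := by
    rw [biQ_aeval P hαne, hγeq]
    exact mul_eq_zero_of_right _ (minpoly.aeval ℤ γ)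
  have hαint : IsIntegral ℤ α :=
    ⟨biQ P, hQmonic, by rw [← Polynomial.aeval_def]; exact hQα⟩
  -- constant term of the minimal polynomial is ±1
  obtain ⟨r, hr⟩ := minpoly.isIntegrallyClosed_dvd hαint hQα
  have hc : (minpoly ℤ α).coeff 0 * r.coeff 0 = 1 := by
    have := congrArg (fun p => Polynomial.coeff p 0) hr
    simp only [Polynomial.mul_coeff_zero, hQ0] at this
    exact this.symm
  have hc' : (minpoly ℤ α).coeff 0 = 1 ∨ (minpoly ℤ α).coeff 0 = -1 :=
    Int.isUnit_iff.mp (IsUnit.of_mul_eq_one _ hc)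
  have hmapα : minpoly ℚ α = (minpoly ℤ α).map (algebraMap ℤ ℚ) :=
    minpoly.isIntegrallyClosed_eq_field_fractions' ℚ hαint
  have hcoeff : (minpoly ℚ α).coeff 0 = 1 ∨ (minpoly ℚ α).coeff 0 = -1 := by
    rw [hmapα, Polynomial.coeff_map]
    rcases hc' with h | h <;> [left; right] <;> rw [h] <;> simp
  refine ⟨hα, hαint, hcoeff, ?_⟩
  intro z hz hz1 hz2
  -- z is a root of biQ P
  have hdvdQ : minpoly ℚ α ∣ (biQ P).map (algebraMap ℤ ℚ) :=
    minpoly.dvd ℚ α (by rwa [Polynomial.aeval_map_algebraMap])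
  have hzQ : Polynomial.aeval z (biQ P) = 0 := by
    obtain ⟨s, hs⟩ := hdvdQ
    have h0 : Polynomial.aeval z ((biQ P).map (algebraMap ℤ ℚ)) = 0 := by
      rw [hs, map_mul, hz, zero_mul]
    rwa [Polynomial.aeval_map_algebraMap] at h0
  have hz0 : z ≠ 0 := by
    intro h
    rw [h, Polynomial.aeval_def, Polynomial.eval₂_at_zero, hQ0] at hzQ
    simp at hzQ
  -- so w := z + z⁻¹ is a root of the minimal polynomial of γ
  have hzw : Polynomial.aeval (z + z⁻¹) P = 0 := by
    rw [biQ_aeval P hz0] at hzQ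
    rcases mul_eq_zero.mp hzQ with h | h
    · exact absurd h (pow_ne_zero _ hz0)
    · exact h
  have hmapγ : minpoly ℚ γ = P.map (algebraMap ℤ ℚ) :=
    minpoly.isIntegrallyClosed_eq_field_fractions' ℚ hγint
  have hwroot : Polynomial.aeval (z + z⁻¹) (minpoly ℚ γ) = 0 := by
    rw [hmapγ, Polynomial.aeval_map_algebraMap]; exact hzw
  have hαc : (α : ℂ) ≠ 0 := by exact_mod_cast hαne
  have hwne : z + z⁻¹ ≠ (γ : ℂ) := by
    intro h
    have h' : z * z + 1 = (γ : ℂ) * z := by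
      field_simp at h
      linear_combination h
    have hγc : (α : ℂ) + (α : ℂ)⁻¹ = (γ : ℂ) := by
      push_cast [← hγeq]; ring
    have hααinv : (α : ℂ) * (α : ℂ)⁻¹ = 1 := mul_inv_cancel₀ hαc
    have hquad : (z - (α : ℂ)) * (z - ((α : ℂ))⁻¹) = 0 := by
      linear_combination h' - z * hγc + hααinv
    rcases mul_eq_zero.mp hquad with h1 | h1
    · exact hz1 (sub_eq_zero.mp h1)
    · exact hz2 (sub_eq_zero.mp h1)
  have hwb : ‖z + z⁻¹‖ ≤ γ - 2 := hconj _ hwroot hwne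
  set R := ‖z‖ with hRdef
  have hRpos : 0 < R := norm_pos_iff.mpr hz0
  have key1 : R ≤ ‖z + z⁻¹‖ + 1 / R := by
    have h := norm_add_le (z + z⁻¹) (-z⁻¹)
    have e : z + z⁻¹ + -z⁻¹ = z := by ring
    rw [e] at h
    simpa [map_inv₀, one_div] using h
  have key2 : 1 / R ≤ ‖z + z⁻¹‖ + R := by
    have h := norm_add_le (z + z⁻¹) (-z)
    have e : z + z⁻¹ + -z = z⁻¹ := by ring
    rw [e] at h
    simpa [map_inv₀, one_div] using h
  have hwb1 : R - 1 / R ≤ γ - 2 := by linarith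
  have hwb2 : 1 / R - R ≤ γ - 2 := by linarith
  constructor
  · by_contra hh
    push_neg at hh
    have hra : R * α ≤ 1 := (le_div_iff₀ hα0).mp hh
    have h1 : α ≤ 1 / R := (le_div_iff₀ hRpos).mpr (by linarith [mul_comm R α])
    have h2 : (1 : ℝ) ≤ 1 / α := by linarith
    have h3 : α ≤ 1 := by
      have := (le_div_iff₀ hα0).mp h2
      linarith
    linarith
  · by_contra hh
    push_neg at hh
    have h1 : 1 / R ≤ 1 / α := one_div_le_one_div_of_le hα0 hh
    have h2 : (1 : ℝ) ≤ 1 / α := by linarith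
    have h3 : α ≤ 1 := by
      have := (le_div_iff₀ hα0).mp h2
      linarith
    linarith
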